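/- Let B, W, C ∈ ℝ^{n×n} be symmetric positive definite matrices satisfying B ⪯ C⁻¹ ⪯ B + W. Then 0 ⪯ I − B^{1/2} C B^{1/2} ⪯ I − B^{1/2}(B + W)⁻¹B^{1/2}, and consequently every eigenvalue λ of the (generally nonsymmetric) matrix I − CB is real and satisfies 0 ≤ λ ≤ 1 − μ, where μ > 0 is the smallest eigenvalue of B^{1/2}(B + W)⁻¹B^{1/2}; in particular the spectral radius of I − CB is strictly less than 1. -/

import Mathlib

open Matrix

namespace Matrix.PosSemidef

open scoped ComplexOrder

/-- The positive semidefinite square root of a positive semidefinite matrix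
(the definition removed from Mathlib, restored with its old meaning). -/
noncomputable def sqrt {n : Type*} [Fintype n] [DecidableEq n] {𝕜 : Type*} [RCLike 𝕜]
    {A : Matrix n n 𝕜} (hA : PosSemidef A) : Matrix n n 𝕜 :=
  hA.1.eigenvectorUnitary.1 * diagonal ((↑) ∘ (√·) ∘ hA.1.eigenvalues) *
    (star hA.1.eigenvectorUnitary : Matrix n n 𝕜)

lemma posSemidef_sqrt {n : Type*} [Fintype n] [DecidableEq n] {𝕜 : Type*} [RCLike 𝕜]
    {A : Matrix n n 𝕜} (hA : PosSemidef A) : PosSemidef hA.sqrt := by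
  unfold sqrt
  have h := (posSemidef_diagonal_iff (d := ((↑) ∘ (√·) ∘ hA.1.eigenvalues : n → 𝕜))).mpr
    fun i => by
      simp only [Function.comp_apply]
      exact RCLike.ofReal_nonneg.mpr (Real.sqrt_nonneg _)
  have := h.mul_mul_conjTranspose_same (hA.1.eigenvectorUnitary : Matrix n n 𝕜)
  rwa [← Matrix.star_eq_conjTranspose] at this

lemma sqrt_mul_self {n : Type*} [Fintype n] [DecidableEq n] {𝕜 : Type*} [RCLike 𝕜]
    {A : Matrix n n 𝕜} (hA : PosSemidef A) : hA.sqrt * hA.sqrt = A := by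
  have hU : star (hA.1.eigenvectorUnitary : Matrix n n 𝕜) *
      (hA.1.eigenvectorUnitary : Matrix n n 𝕜) = 1 :=
    mem_unitaryGroup_iff'.mp hA.1.eigenvectorUnitary.2
  have hd : diagonal (((↑) ∘ (√·) ∘ hA.1.eigenvalues : n → 𝕜)) *
      diagonal (((↑) ∘ (√·) ∘ hA.1.eigenvalues : n → 𝕜))
      = diagonal (RCLike.ofReal ∘ hA.1.eigenvalues) := by
    rw [diagonal_mul_diagonal]
    congr 1
    funext i
    simp only [Function.comp_apply, ← RCLike.ofReal_mul,
      Real.mul_self_sqrt (hA.eigenvalues_nonneg i)]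
  conv_rhs => rw [hA.1.spectral_theorem, Unitary.conjStarAlgAut_apply]
  unfold sqrt
  simp only [Matrix.mul_assoc]
  rw [← Matrix.mul_assoc (star _), hU, Matrix.one_mul,
    ← Matrix.mul_assoc (diagonal _) (diagonal _), hd]

end Matrix.PosSemidef

open scoped ComplexOrder

private lemma conj_psd {n : ℕ} {X A : Matrix (Fin n) (Fin n) ℝ} (hX : X.PosSemidef)
    (hA : A.IsHermitian) : (A * X * A).PosSemidef := by
  have h := hX.mul_mul_conjTranspose_same A
  rwa [hA.eq] at h

private lemma posDef_smul_one {n : ℕ} {c : ℝ} (hc : 0 < c) :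
    ((c • 1 : Matrix (Fin n) (Fin n) ℝ)).PosDef := by
  rw [smul_one_eq_diagonal]
  exact posDef_diagonal_iff.mpr fun _ => hc

private lemma posDef_smul_one_c {n : ℕ} {c : ℝ} (hc : 0 < c) :
    (((c : ℂ) • 1 : Matrix (Fin n) (Fin n) ℂ)).PosDef := by
  rw [smul_one_eq_diagonal]
  exact posDef_diagonal_iff.mpr fun _ => by exact_mod_cast hc

private lemma spectrum_nonneg' {n : ℕ} {A : Matrix (Fin n) (Fin n) ℝ} (h : A.PosSemidef)
    {lam : ℝ} (hlam : lam ∈ spectrum ℝ A) : 0 ≤ lam := by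
  by_contra hlt
  push_neg at hlt
  have h1 : (((-lam) • (1 : Matrix (Fin n) (Fin n) ℝ)) + A).PosDef :=
    (posDef_smul_one (by linarith)).add_posSemidef h
  have h2 : algebraMap ℝ (Matrix (Fin n) (Fin n) ℝ) lam - A
      = -(((-lam) • (1 : Matrix (Fin n) (Fin n) ℝ)) + A) := by
    rw [Algebra.algebraMap_eq_smul_one]
    module
  exact (spectrum.mem_iff.mp hlam) (h2 ▸ h1.isUnit.neg)

private lemma spectrum_le_c {n : ℕ} {A : Matrix (Fin n) (Fin n) ℂ} {c lam : ℝ}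
    (h : ((c : ℂ) • (1 : Matrix (Fin n) (Fin n) ℂ) - A).PosSemidef)
    (hlam : lam ∈ spectrum ℝ A) : lam ≤ c := by
  by_contra hlt
  push_neg at hlt
  have h1 : ((((lam - c : ℝ) : ℂ) • (1 : Matrix (Fin n) (Fin n) ℂ))
      + ((c : ℂ) • 1 - A)).PosDef :=
    (posDef_smul_one_c (by linarith)).add_posSemidef h
  have halg : algebraMap ℝ (Matrix (Fin n) (Fin n) ℂ) lam = (lam : ℂ) • 1 := by
    rw [Algebra.algebraMap_eq_smul_one]
    ext i j
    simp [Matrix.smul_apply, Complex.real_smul]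
  have h2 : algebraMap ℝ (Matrix (Fin n) (Fin n) ℂ) lam - A
      = (((lam - c : ℝ) : ℂ) • (1 : Matrix (Fin n) (Fin n) ℂ)) + ((c : ℂ) • 1 - A) := by
    rw [halg]
    push_cast
    rw [sub_smul]
    abel
  exact (spectrum.mem_iff.mp hlam) (h2 ▸ h1.isUnit)

private lemma one_sub_inv {n : ℕ} {Q : Matrix (Fin n) (Fin n) ℝ} (hQ : Q.PosSemidef)
    (hQdet : IsUnit Q.det) (h : (Q - 1).PosSemidef) :
    ((1 : Matrix (Fin n) (Fin n) ℝ) - Q⁻¹).PosSemidef := by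
  have hQi : (Q⁻¹).PosSemidef := hQ.inv
  set P := hQi.sqrt with hPdef
  have hP : P.PosSemidef := hQi.posSemidef_sqrt
  have hPP : P * P = Q⁻¹ := hQi.sqrt_mul_self
  have hdet : IsUnit P.det := by
    have hd : P.det * P.det = (Q⁻¹).det := by rw [← det_mul, hPP]
    have h' : IsUnit ((Q⁻¹).det) := Q.isUnit_nonsing_inv_det hQdet
    rw [← hd] at h'
    exact isUnit_of_mul_isUnit_left h'
  have hQ' : Q = P⁻¹ * P⁻¹ := by
    rw [← Matrix.mul_inv_rev, hPP, Matrix.nonsing_inv_nonsing_inv _ hQdet]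
  have hPQP : P * Q * P = 1 := by
    rw [hQ']
    simp only [Matrix.mul_assoc]
    rw [Matrix.nonsing_inv_mul _ hdet, Matrix.mul_one, Matrix.mul_nonsing_inv _ hdet]
  have key : (1 : Matrix (Fin n) (Fin n) ℝ) - Q⁻¹ = P * (Q - 1) * P := by
    rw [Matrix.mul_sub, Matrix.sub_mul, Matrix.mul_one, hPQP, hPP]
  rw [key]
  exact conj_psd h hP.1

private lemma inv_sub_inv_psd {n : ℕ} {A D : Matrix (Fin n) (Fin n) ℝ} (hA : A.PosDef)
    (hD : D.PosDef) (h : (D - A).PosSemidef) : (A⁻¹ - D⁻¹).PosSemidef := by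
  have hR : hA.posSemidef.sqrt.PosSemidef := hA.posSemidef.posSemidef_sqrt
  set R := hA.posSemidef.sqrt with hRdef
  have hRR : R * R = A := hA.posSemidef.sqrt_mul_self
  have hAdet : IsUnit A.det := isUnit_iff_isUnit_det A |>.mp hA.isUnit
  have hRdet : IsUnit R.det := by
    have hd : R.det * R.det = A.det := by rw [← det_mul, hRR]
    rw [← hd] at hAdet
    exact isUnit_of_mul_isUnit_left hAdet
  have hRinv : (R⁻¹).PosSemidef := hR.inv
  have hRiA : R⁻¹ * A * R⁻¹ = 1 := by
    rw [← hRR]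
    simp only [Matrix.mul_assoc]
    rw [Matrix.mul_nonsing_inv _ hRdet, Matrix.mul_one, Matrix.nonsing_inv_mul _ hRdet]
  have hQpsd : (R⁻¹ * D * R⁻¹).PosSemidef := conj_psd hD.posSemidef hRinv.1
  have hQdet : IsUnit (R⁻¹ * D * R⁻¹).det := by
    rw [det_mul, det_mul]
    exact ((R.isUnit_nonsing_inv_det hRdet).mul
      (isUnit_iff_isUnit_det D |>.mp hD.isUnit)).mul (R.isUnit_nonsing_inv_det hRdet)
  have hQ1 : (R⁻¹ * D * R⁻¹ - 1).PosSemidef := by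
    have e : R⁻¹ * (D - A) * R⁻¹ = R⁻¹ * D * R⁻¹ - 1 := by
      rw [Matrix.mul_sub, Matrix.sub_mul, hRiA]
    rw [← e]
    exact conj_psd h hRinv.1
  have hmain := one_sub_inv hQpsd hQdet hQ1
  have hQinv : (R⁻¹ * D * R⁻¹)⁻¹ = R * D⁻¹ * R := by
    rw [Matrix.mul_inv_rev, Matrix.mul_inv_rev, Matrix.nonsing_inv_nonsing_inv _ hRdet]
    simp only [Matrix.mul_assoc]
  rw [hQinv] at hmain
  have hfin := conj_psd hmain hRinv.1
  have e1 : R⁻¹ * (1 : Matrix (Fin n) (Fin n) ℝ) * R⁻¹ = A⁻¹ := by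
    rw [Matrix.mul_one, ← Matrix.mul_inv_rev, hRR]
  have e2 : R⁻¹ * (R * D⁻¹ * R) * R⁻¹ = D⁻¹ := by
    simp only [Matrix.mul_assoc]
    rw [Matrix.mul_nonsing_inv _ hRdet, Matrix.mul_one, ← Matrix.mul_assoc,
      Matrix.nonsing_inv_mul _ hRdet, Matrix.one_mul]
  rwa [Matrix.mul_sub, Matrix.sub_mul, e1, e2] at hfin

private lemma map_herm {n : ℕ} {A : Matrix (Fin n) (Fin n) ℝ} (hA : A.IsHermitian) :
    (A.map Complex.ofReal).IsHermitian := by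
  ext i j
  have h : A j i = A i j := by
    conv_lhs => rw [← hA.eq]
    simp [conjTranspose_apply]
  simp [conjTranspose_apply, Matrix.map_apply, h]

private lemma map_mul' {n : ℕ} (X Y : Matrix (Fin n) (Fin n) ℝ) :
    (X * Y).map Complex.ofReal = X.map Complex.ofReal * Y.map Complex.ofReal :=
  Matrix.map_mul (f := Complex.ofRealHom)

private lemma posSemidef_map {n : ℕ} {A : Matrix (Fin n) (Fin n) ℝ} (hA : A.PosSemidef) :
    (A.map Complex.ofReal).PosSemidef := by
  have hR : hA.sqrt.PosSemidef := hA.posSemidef_sqrt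
  have h1 : (hA.sqrt.map Complex.ofReal)ᴴ = hA.sqrt.map Complex.ofReal := (map_herm hR.1).eq
  have h2 : A.map Complex.ofReal
      = (hA.sqrt.map Complex.ofReal)ᴴ * (hA.sqrt.map Complex.ofReal) := by
    rw [h1, ← map_mul', hA.sqrt_mul_self]
  rw [h2]
  exact posSemidef_conjTranspose_mul_self _

set_option maxHeartbeats 1000000 in
/-- Let `B, W, C` be symmetric positive definite with
`B ⪯ C⁻¹ ⪯ B + W`. Then `0 ⪯ I − B^{1/2} C B^{1/2} ⪯ I − B^{1/2}(B+W)⁻¹B^{1/2}`, and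
every eigenvalue `λ` of the (generally nonsymmetric) matrix `I − C B` is real with
`0 ≤ λ ≤ 1 − μ`, where `μ > 0` is the smallest eigenvalue of
`B^{1/2}(B+W)⁻¹B^{1/2}`; in particular the spectral radius of `I − C B` is strictly
less than `1`. -/
theorem kalman_mean_iteration_spectral_bound
    {n : ℕ} (hn : 0 < n)
    (B W C : Matrix (Fin n) (Fin n) ℝ)
    (hB : B.PosDef) (hW : W.PosDef) (hC : C.PosDef)
    (hlow : (C⁻¹ - B).PosSemidef) (hup : (B + W - C⁻¹).PosSemidef)
    (μ : ℝ)
    (hμ : IsLeast (spectrum ℝ (hB.posSemidef.sqrt * (B + W)⁻¹ * hB.posSemidef.sqrt)) μ) :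
    0 < μ ∧
    ((1 : Matrix (Fin n) (Fin n) ℝ) - hB.posSemidef.sqrt * C * hB.posSemidef.sqrt).PosSemidef ∧
    (((1 : Matrix (Fin n) (Fin n) ℝ) - hB.posSemidef.sqrt * (B + W)⁻¹ * hB.posSemidef.sqrt) -
      ((1 : Matrix (Fin n) (Fin n) ℝ) - hB.posSemidef.sqrt * C * hB.posSemidef.sqrt)).PosSemidef ∧
    ∀ z ∈ spectrum ℂ (((1 : Matrix (Fin n) (Fin n) ℝ) - C * B).map (Complex.ofReal)),
      ∃ lam : ℝ, z = (lam : ℂ) ∧ 0 ≤ lam ∧ lam ≤ 1 - μ ∧ ‖z‖ < 1 := by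
  set S := hB.posSemidef.sqrt with hSdef
  have hS : S.PosSemidef := hB.posSemidef.posSemidef_sqrt
  have hSS : S * S = B := hB.posSemidef.sqrt_mul_self
  have hBdet : IsUnit B.det := isUnit_iff_isUnit_det B |>.mp hB.isUnit
  have hSdet : IsUnit S.det := by
    have hd : S.det * S.det = B.det := by rw [← det_mul, hSS]
    rw [← hd] at hBdet
    exact isUnit_of_mul_isUnit_left hBdet
  have hCdet : IsUnit C.det := isUnit_iff_isUnit_det C |>.mp hC.isUnit
  have hBW : (B + W).PosDef := hB.add_posSemidef hW.posSemidef
  -- part 2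
  have h2' : (B⁻¹ - C).PosSemidef := by
    have h := inv_sub_inv_psd hB hC.inv hlow
    rwa [Matrix.nonsing_inv_nonsing_inv _ hCdet] at h
  have hSinvS : S * B⁻¹ * S = 1 := by
    rw [← hSS, Matrix.mul_inv_rev]
    simp only [Matrix.mul_assoc]
    rw [Matrix.nonsing_inv_mul _ hSdet, Matrix.mul_one, Matrix.mul_nonsing_inv _ hSdet]
  have part2 : ((1 : Matrix (Fin n) (Fin n) ℝ) - S * C * S).PosSemidef := by
    have e : (1 : Matrix (Fin n) (Fin n) ℝ) - S * C * S = S * (B⁻¹ - C) * S := by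
      rw [Matrix.mul_sub, Matrix.sub_mul, hSinvS]
    rw [e]
    exact conj_psd h2' hS.1
  -- part 3
  have h3' : (C - (B + W)⁻¹).PosSemidef := by
    have h := inv_sub_inv_psd hC.inv hBW hup
    rwa [Matrix.nonsing_inv_nonsing_inv _ hCdet] at h
  have part3 : (((1 : Matrix (Fin n) (Fin n) ℝ) - S * (B + W)⁻¹ * S) -
      ((1 : Matrix (Fin n) (Fin n) ℝ) - S * C * S)).PosSemidef := by
    have e : ((1 : Matrix (Fin n) (Fin n) ℝ) - S * (B + W)⁻¹ * S) -
        ((1 : Matrix (Fin n) (Fin n) ℝ) - S * C * S) = S * (C - (B + W)⁻¹) * S := by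
      rw [Matrix.mul_sub, Matrix.sub_mul]
      abel
    rw [e]
    exact conj_psd h3' hS.1
  -- facts about M := S * (B+W)⁻¹ * S
  have hMpsd : (S * (B + W)⁻¹ * S).PosSemidef := conj_psd hBW.inv.posSemidef hS.1
  have hMunit : IsUnit (S * (B + W)⁻¹ * S) :=
    (((isUnit_iff_isUnit_det S).mpr hSdet).mul hBW.inv.isUnit).mul
      ((isUnit_iff_isUnit_det S).mpr hSdet)
  have hμ0 : 0 ≤ μ := spectrum_nonneg' hMpsd hμ.1
  have hμpos : 0 < μ := by
    rcases eq_or_lt_of_le hμ0 with h0 | h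
    · exfalso
      have hmem := hμ.1
      rw [← h0] at hmem
      exact (spectrum.mem_iff.mp hmem) (by rw [map_zero, zero_sub]; exact hMunit.neg)
    · exact h
  -- M - μ•1 is psd
  have hle : ∀ i, μ ≤ hMpsd.1.eigenvalues i := fun i =>
    hμ.2 (hMpsd.1.eigenvalues_mem_spectrum_real i)
  have hMμ : ((S * (B + W)⁻¹ * S) - μ • (1 : Matrix (Fin n) (Fin n) ℝ)).PosSemidef := by
    set U : Matrix (Fin n) (Fin n) ℝ := (hMpsd.1.eigenvectorUnitary : Matrix (Fin n) (Fin n) ℝ)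
      with hUdef
    have hU : U * star U = 1 := mem_unitaryGroup_iff.mp hMpsd.1.eigenvectorUnitary.2
    have hdiag : (diagonal (RCLike.ofReal ∘ hMpsd.1.eigenvalues)
        - μ • (1 : Matrix (Fin n) (Fin n) ℝ)).PosSemidef := by
      rw [smul_one_eq_diagonal, diagonal_sub]
      refine posSemidef_diagonal_iff.mpr fun i => ?_
      simpa using sub_nonneg.mpr (hle i)
    have hconj := hdiag.mul_mul_conjTranspose_same U
    rw [← Matrix.star_eq_conjTranspose] at hconj
    have hsm : U * (μ • (1 : Matrix (Fin n) (Fin n) ℝ)) * star U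
        = μ • (1 : Matrix (Fin n) (Fin n) ℝ) := by
      rw [Matrix.mul_smul, Matrix.smul_mul, Matrix.mul_one, hU]
    have key : U * (diagonal (RCLike.ofReal ∘ hMpsd.1.eigenvalues)
        - μ • (1 : Matrix (Fin n) (Fin n) ℝ)) * star U
        = (S * (B + W)⁻¹ * S) - μ • (1 : Matrix (Fin n) (Fin n) ℝ) := by
      rw [Matrix.mul_sub, Matrix.sub_mul, hsm, hUdef, ← Unitary.conjStarAlgAut_apply (S := ℝ),
        ← hMpsd.1.spectral_theorem]
    rwa [key] at hconj
  have hTup : ((1 - μ) • (1 : Matrix (Fin n) (Fin n) ℝ) -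
      ((1 : Matrix (Fin n) (Fin n) ℝ) - S * C * S)).PosSemidef := by
    have hsum := part3.add hMμ
    have e : (((1 : Matrix (Fin n) (Fin n) ℝ) - S * (B + W)⁻¹ * S) -
        ((1 : Matrix (Fin n) (Fin n) ℝ) - S * C * S)) +
        ((S * (B + W)⁻¹ * S) - μ • (1 : Matrix (Fin n) (Fin n) ℝ))
        = (1 - μ) • (1 : Matrix (Fin n) (Fin n) ℝ) -
          ((1 : Matrix (Fin n) (Fin n) ℝ) - S * C * S) := by
      rw [sub_smul, one_smul]
      abel
    rwa [e] at hsum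
  refine ⟨hμpos, part2, part3, ?_⟩
  intro z hz
  set T : Matrix (Fin n) (Fin n) ℝ := (1 : Matrix (Fin n) (Fin n) ℝ) - S * C * S with hTdef
  -- similarity: S (1 - CB) = T S
  have hsim : S * ((1 : Matrix (Fin n) (Fin n) ℝ) - C * B) = T * S := by
    rw [hTdef, Matrix.mul_sub, Matrix.sub_mul, Matrix.mul_one, Matrix.one_mul]
    congr 1
    rw [← hSS]
    simp only [Matrix.mul_assoc]
  have hSdetne : S.det ≠ 0 := hSdet.ne_zero
  have hdm : (Complex.ofReal S.det : ℂ) = (S.map Complex.ofReal).det :=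
    RingHom.map_det Complex.ofRealHom S
  have hScdet : IsUnit (S.map Complex.ofReal).det := by
    rw [← hdm]
    exact isUnit_iff_ne_zero.mpr (by exact_mod_cast hSdetne)
  obtain ⟨u, hu⟩ := (isUnit_iff_isUnit_det _).mpr hScdet
  have h1 : (u : Matrix (Fin n) (Fin n) ℂ) *
        (((1 : Matrix (Fin n) (Fin n) ℝ) - C * B).map Complex.ofReal)
      = (T.map Complex.ofReal) * (u : Matrix (Fin n) (Fin n) ℂ) := by
    rw [hu, ← map_mul', ← map_mul', hsim]
  have hconj : ((1 : Matrix (Fin n) (Fin n) ℝ) - C * B).map Complex.ofReal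
      = ((u⁻¹ : (Matrix (Fin n) (Fin n) ℂ)ˣ) : Matrix (Fin n) (Fin n) ℂ) *
        (T.map Complex.ofReal) * (u : Matrix (Fin n) (Fin n) ℂ) := by
    calc ((1 : Matrix (Fin n) (Fin n) ℝ) - C * B).map Complex.ofReal
        = ((u⁻¹ : (Matrix (Fin n) (Fin n) ℂ)ˣ) : Matrix (Fin n) (Fin n) ℂ) *
          ((u : Matrix (Fin n) (Fin n) ℂ) *
            (((1 : Matrix (Fin n) (Fin n) ℝ) - C * B).map Complex.ofReal)) := by
          rw [← mul_assoc, Units.inv_mul, one_mul]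
      _ = ((u⁻¹ : (Matrix (Fin n) (Fin n) ℂ)ˣ) : Matrix (Fin n) (Fin n) ℂ) *
          ((T.map Complex.ofReal) * (u : Matrix (Fin n) (Fin n) ℂ)) := by rw [h1]
      _ = ((u⁻¹ : (Matrix (Fin n) (Fin n) ℂ)ˣ) : Matrix (Fin n) (Fin n) ℂ) *
          (T.map Complex.ofReal) * (u : Matrix (Fin n) (Fin n) ℂ) := by rw [mul_assoc]
  have hzT : z ∈ spectrum ℂ (T.map Complex.ofReal) := by
    rw [hconj, spectrum.units_conjugate'] at hz
    exact hz
  have hTcpsd : (T.map Complex.ofReal).PosSemidef := posSemidef_map part2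
  have hTcH : (T.map Complex.ofReal).IsHermitian := hTcpsd.1
  have hspec : spectrum ℂ (T.map Complex.ofReal)
      = Set.range (RCLike.ofReal ∘ hTcH.eigenvalues) := by
    conv_lhs => rw [hTcH.spectral_theorem, Unitary.conjStarAlgAut_apply, Unitary.spectrum_star_right_conjugate]
    exact spectrum_diagonal _
  rw [hspec] at hzT
  obtain ⟨i, hi⟩ := hzT
  have hznn : 0 ≤ hTcH.eigenvalues i := hTcpsd.eigenvalues_nonneg i
  have hupc : (((1 - μ : ℝ) : ℂ) • (1 : Matrix (Fin n) (Fin n) ℂ)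
      - T.map Complex.ofReal).PosSemidef := by
    have hm := posSemidef_map hTup
    have e : ((1 - μ) • (1 : Matrix (Fin n) (Fin n) ℝ) - T).map Complex.ofReal
        = ((1 - μ : ℝ) : ℂ) • (1 : Matrix (Fin n) (Fin n) ℂ) - T.map Complex.ofReal := by
      ext i j
      simp only [Matrix.map_apply, Matrix.sub_apply, Matrix.smul_apply, Matrix.one_apply,
        smul_eq_mul, Complex.real_smul]
      split <;> push_cast <;> ring
    rwa [e] at hm
  have hzle : hTcH.eigenvalues i ≤ 1 - μ :=
    spectrum_le_c hupc (hTcH.eigenvalues_mem_spectrum_real i)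
  refine ⟨hTcH.eigenvalues i, hi.symm, hznn, hzle, ?_⟩
  rw [← hi]
  have habs : ‖((hTcH.eigenvalues i : ℝ) : ℂ)‖ = |hTcH.eigenvalues i| := by
    rw [Complex.norm_real, Real.norm_eq_abs]
  have : (RCLike.ofReal ∘ hTcH.eigenvalues) i = ((hTcH.eigenvalues i : ℝ) : ℂ) := rfl
  rw [this, habs, abs_of_nonneg hznn]
  linarith
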